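/- Let u, v be nonempty words over a well-ordered alphabet with v a Lyndon word. The following are equivalent: (1) u ≺ v^n for some n ≥ 1; (2) u <_lex v^n for all n ≥ 1; (3) the first Lyndon atom in the Lyndon decomposition of u is pseudo-lexicographically smaller than v. -/

import Mathlib

variable {X : Type*} [LinearOrder X] [WellFoundedLT X]

/-- The partial order `≺` on words: `u ≺ v` iff `u = r ++ x :: s`, `v = r ++ y :: t`
with letters `x < y`. -/
def Prec (u v : List X) : Prop :=
  ∃ (r s t : List X) (x y : X), x < y ∧ u = r ++ x :: s ∧ v = r ++ y :: t

/-- The pseudo-lexicographic order: `u <_lex v` iff `v` is a proper prefix of `u` or `u ≺ v`. -/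
def PLex (u v : List X) : Prop :=
  (v <+: u ∧ v ≠ u) ∨ Prec u v

/-- `u ≤_lex v`. -/
def PLexLe (u v : List X) : Prop := u = v ∨ PLex u v

/-- A Lyndon word (Kharchenko convention): a nonempty word strictly greater in the
pseudo-lexicographic order than each of its proper nonempty suffixes. -/
def IsLyndon (u : List X) : Prop :=
  u ≠ [] ∧ ∀ v w : List X, u = v ++ w → v ≠ [] → w ≠ [] → PLex w u


/-- `l` is the Lyndon decomposition of `u`: `u` is the concatenation of the Lyndon
words in `l`, listed in nondecreasing pseudo-lexicographic order. -/
def IsLyndonDecomp (u : List X) (l : List (List X)) : Prop :=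
  u = l.flatten ∧ (∀ v ∈ l, IsLyndon v) ∧ l.Chain' PLexLe


/-- `v ^ n`: the `n`-th power of the word `v`. -/
def wpow (v : List X) (n : ℕ) : List X := (List.replicate n v).flatten

/-! ### Auxiliary lemmas -/

section Aux

local instance (priority := 100) : IsStrictTotalOrder X (· > ·) where
  trichotomous a b := by
    intro h1 h2
    exact le_antisymm (not_lt.1 h1) (not_lt.1 h2)
  irrefl a := lt_irrefl a
  trans a b c h1 h2 := h2.trans h1

private lemma lex_of_proper_prefix {α : Type*} (r : α → α → Prop) :
    ∀ u v : List α, u <+: v → u ≠ v → List.Lex r u v := by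
  intro u
  induction u with
  | nil =>
    intro v _ hne
    cases v with
    | nil => exact absurd rfl hne
    | cons b t => exact List.Lex.nil
  | cons a u ih =>
    intro v hp hne
    cases v with
    | nil => simpa using hp.length_le
    | cons b t =>
      rw [List.cons_prefix_cons] at hp
      obtain ⟨rfl, hp⟩ := hp
      exact List.Lex.cons (ih t hp (by rintro rfl; exact hne rfl))

private lemma lex_of_parts {α : Type*} {r : α → α → Prop} :
    ∀ (p : List α) {s t : List α} {a b : α}, r a b →
      List.Lex r (p ++ a :: s) (p ++ b :: t) := by
  intro p
  induction p with
  | nil => intro s t a b h; exact List.Lex.rel h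
  | cons c p ih => intro s t a b h; exact List.Lex.cons (ih h)

private lemma lex_iff {α : Type*} (r : α → α → Prop) (u v : List α) :
    List.Lex r u v ↔ (u <+: v ∧ u ≠ v) ∨
      ∃ (p s t : List α) (a b : α), r a b ∧ u = p ++ a :: s ∧ v = p ++ b :: t := by
  constructor
  · intro h
    induction h with
    | @nil b l => exact Or.inl ⟨List.nil_prefix, by simp⟩
    | @rel a l₁ b l₂ h => exact Or.inr ⟨[], l₁, l₂, a, b, h, rfl, rfl⟩
    | @cons a l₁ l₂ h ih =>
      rcases ih with ⟨hp, hne⟩ | ⟨p, s, t, x, y, hxy, h1, h2⟩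
      · refine Or.inl ⟨?_, by simpa using hne⟩
        rw [List.cons_prefix_cons]; exact ⟨rfl, hp⟩
      · exact Or.inr ⟨a :: p, s, t, x, y, hxy, by simp [h1], by simp [h2]⟩
  · rintro (⟨hp, hne⟩ | ⟨p, s, t, a, b, hab, rfl, rfl⟩)
    · exact lex_of_proper_prefix r u v hp hne
    · exact lex_of_parts p hab

private lemma plex_iff_lex (u v : List X) : PLex u v ↔ List.Lex (· > ·) v u := by
  rw [lex_iff]
  constructor
  · rintro (⟨hp, hne⟩ | ⟨r, s, t, x, y, hxy, hu, hv⟩)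
    · exact Or.inl ⟨hp, hne⟩
    · exact Or.inr ⟨r, t, s, y, x, hxy, hv, hu⟩
  · rintro (⟨hp, hne⟩ | ⟨p, s, t, a, b, hab, hv, hu⟩)
    · exact Or.inl ⟨hp, hne⟩
    · exact Or.inr ⟨p, t, s, b, a, hab, hu, hv⟩

private lemma plex_trans {a b c : List X} (h1 : PLex a b) (h2 : PLex b c) : PLex a c := by
  rw [plex_iff_lex] at *
  exact List.lex_trans (fun h1 h2 => h2.trans h1) h2 h1

private lemma plex_irrefl (a : List X) : ¬ PLex a a := by
  rw [plex_iff_lex]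
  exact irrefl_of (List.Lex (· > ·)) a

private lemma plex_asymm {a b : List X} (h1 : PLex a b) (h2 : PLex b a) : False := by
  rw [plex_iff_lex] at *
  exact asymm_of (List.Lex (· > ·)) h1 h2

private lemma plexle_of_not_plex {a b : List X} (h : ¬ PLex a b) : PLexLe b a := by
  rw [plex_iff_lex] at h
  rcases trichotomous_of (List.Lex (· > ·)) a b with h' | h' | h'
  · exact Or.inr ((plex_iff_lex b a).2 h')
  · exact Or.inl h'.symm
  · exact absurd h' h

private lemma plexle_trans {a b c : List X} (h1 : PLexLe a b) (h2 : PLexLe b c) :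
    PLexLe a c := by
  rcases h1 with rfl | h1
  · exact h2
  rcases h2 with rfl | h2
  · exact Or.inr h1
  · exact Or.inr (plex_trans h1 h2)

private lemma plex_trans_plexle {a b c : List X} (h1 : PLex a b) (h2 : PLexLe b c) :
    PLex a c := by
  rcases h2 with rfl | h2
  · exact h1
  · exact plex_trans h1 h2

private lemma not_plex_of_plexle {a b : List X} (h : PLexLe a b) : ¬ PLex b a := by
  rcases h with rfl | h
  · exact plex_irrefl a
  · exact fun h' => plex_asymm h h'

private lemma plex_nil {c : List X} (hc : c ≠ []) : PLex c [] :=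
  Or.inl ⟨List.nil_prefix, fun h => hc h.symm⟩

private lemma plex_append_left (w : List X) {p q : List X} (h : PLex p q) :
    PLex (w ++ p) (w ++ q) := by
  rcases h with ⟨⟨d, hd⟩, hne⟩ | ⟨r, s, t, x, y, hxy, hp, hq⟩
  · refine Or.inl ⟨⟨d, by rw [← hd, List.append_assoc]⟩, fun h => hne ?_⟩
    exact List.append_cancel_left h
  · exact Or.inr ⟨w ++ r, s, t, x, y, hxy, by simp [hp], by simp [hq]⟩

private lemma plexle_append_left (w : List X) {p q : List X} (h : PLexLe p q) :
    PLexLe (w ++ p) (w ++ q) := by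
  rcases h with rfl | h
  · exact Or.inl rfl
  · exact Or.inr (plex_append_left w h)

private lemma wpow_succ (v : List X) (n : ℕ) : wpow v (n + 1) = v ++ wpow v n := by
  rw [wpow, wpow, List.replicate_succ, List.flatten_cons]

private lemma wpow_zero (v : List X) : wpow v 0 = [] := rfl

private lemma wpow_length (v : List X) (n : ℕ) : (wpow v n).length = n * v.length := by
  simp [wpow]

private lemma wpow_add (v : List X) (m n : ℕ) :
    wpow v (m + n) = wpow v m ++ wpow v n := by
  rw [wpow, wpow, wpow, List.replicate_add, List.flatten_append]

/-- Part A, forward direction. -/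
private lemma prec_wpow_mono {u v : List X} {n : ℕ} (hn : 1 ≤ n)
    (h : Prec u (wpow v n)) : ∀ m, 1 ≤ m → PLex u (wpow v m) := by
  obtain ⟨r, s, t, x, y, hxy, hu, hv⟩ := h
  intro m hm
  rcases le_or_gt n m with hnm | hnm
  · -- wpow v m = wpow v n ++ wpow v (m - n)
    have hsplit : wpow v m = wpow v n ++ wpow v (m - n) := by
      rw [← wpow_add, Nat.add_sub_cancel' hnm]
    exact Or.inr ⟨r, s, t ++ wpow v (m - n), x, y, hxy, hu,
      by rw [hsplit, hv]; simp⟩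
  · -- m < n, wpow v n = wpow v m ++ wpow v (n - m)
    have hsplit : wpow v n = wpow v m ++ wpow v (n - m) := by
      rw [← wpow_add, Nat.add_sub_cancel' hnm.le]
    by_cases hpre : wpow v m <+: r
    · obtain ⟨r₂, hr₂⟩ := hpre
      refine Or.inl ⟨⟨r₂ ++ x :: s, by rw [hu, ← hr₂, List.append_assoc]⟩, fun heq => ?_⟩
      have h1 : (wpow v m).length ≤ r.length := by
        rw [← hr₂]; simp
      have h2 : u.length = r.length + 1 + s.length := by simp [hu]; omega
      have h3 : (wpow v m).length = u.length := by rw [heq]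
      omega
    · have hr1 : r <+: wpow v n := ⟨y :: t, hv.symm⟩
      have hr2 : wpow v m <+: wpow v n := ⟨wpow v (n - m), hsplit.symm⟩
      have hcmp : r <+: wpow v m := by
        rcases le_or_gt r.length (wpow v m).length with hle | hlt
        · exact List.prefix_of_prefix_length_le hr1 hr2 hle
        · exact absurd (List.prefix_of_prefix_length_le hr2 hr1 hlt.le) hpre
      obtain ⟨d, hd⟩ := hcmp
      have hdne : d ≠ [] := by
        rintro rfl
        exact hpre ⟨[], by simp [← hd]⟩
      have : d ++ wpow v (n - m) = y :: t := by
        have := hsplit.symm.trans hv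
        rw [← hd, List.append_assoc] at this
        exact List.append_cancel_left this
      cases d with
      | nil => exact absurd rfl hdne
      | cons a d' =>
        rw [List.cons_append] at this
        injection this with h1 _h2
        rw [h1] at hd
        exact Or.inr ⟨r, s, d', x, y, hxy, hu, hd.symm⟩

/-- Part A, backward direction. -/
private lemma prec_of_forall_plex {u v : List X} (hv : v ≠ [])
    (h : ∀ n, 1 ≤ n → PLex u (wpow v n)) : ∃ n, 1 ≤ n ∧ Prec u (wpow v n) := by
  refine ⟨u.length + 1, by omega, ?_⟩
  rcases h (u.length + 1) (by omega) with ⟨hp, _⟩ | hprec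
  · exfalso
    have h1 := hp.length_le
    have h2 : 1 ≤ v.length := List.length_pos_iff.2 hv
    rw [wpow_length] at h1
    nlinarith
  · exact hprec

/-- Key lemma for the hard direction: if `c ≠ []` and `c ≺ v ++ c`, then
`c ++ z <_lex vⁿ` for all `n ≥ 1` and all `z`. -/
private lemma lemC {v : List X} (hv : v ≠ []) :
    ∀ (N : ℕ) (c : List X), c.length ≤ N → c ≠ [] → Prec c (v ++ c) →
      ∀ n, 1 ≤ n → ∀ z, PLex (c ++ z) (wpow v n) := by
  intro N
  induction N with
  | zero =>
    intro c hc hne _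
    cases c with
    | nil => exact absurd rfl hne
    | cons a c => simp at hc
  | succ N ih =>
    intro c hcN hne hprec n hn z
    obtain ⟨m, rfl⟩ : ∃ m, n = m + 1 := ⟨n - 1, by omega⟩
    obtain ⟨r, s, t, x, y, hxy, hc, hvc⟩ := hprec
    rcases lt_or_ge r.length v.length with hrv | hrv
    · -- r is a proper prefix of v; v = r ++ y :: d'
      have hrpre : r <+: v :=
        List.prefix_of_prefix_length_le
          (⟨y :: t, hvc.symm⟩ : r <+: v ++ c) (v.prefix_append c) hrv.le
      obtain ⟨d, hd⟩ := hrpre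
      have hdne : d ≠ [] := by
        rintro rfl
        rw [List.append_nil] at hd
        simp [hd] at hrv
      have hdc : d ++ c = y :: t := by
        have := hvc
        rw [← hd, List.append_assoc] at this
        exact List.append_cancel_left this
      cases d with
      | nil => exact absurd rfl hdne
      | cons a d' =>
        rw [List.cons_append] at hdc
        injection hdc with h1 _
        rw [h1] at hd
        refine Or.inr ⟨r, s ++ z, d' ++ wpow v m, x, y, hxy,
          by rw [hc]; simp, ?_⟩
        rw [wpow_succ, ← hd]
        simp
    · -- v is a prefix of r; recurse
      have hvpre : v <+: r :=
        List.prefix_of_prefix_length_le (v.prefix_append c)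
          (⟨y :: t, hvc.symm⟩ : r <+: v ++ c) hrv
      obtain ⟨r', rfl⟩ := hvpre
      have hc2 : c = r' ++ y :: t := by
        have := hvc
        rw [List.append_assoc] at this
        exact List.append_cancel_left this
      have hc1 : c = v ++ (r' ++ x :: s) := by
        rw [hc, List.append_assoc]
      set c' : List X := r' ++ x :: s with hc'def
      have hprec' : Prec c' (v ++ c') := ⟨r', s, t, x, y, hxy, rfl, by rw [← hc1, hc2]⟩
      have hlen : c'.length ≤ N := by
        have h1 : c.length = v.length + c'.length := by rw [hc1]; simp
        have h2 : 1 ≤ v.length := List.length_pos_iff.2 hv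
        omega
      have hc'ne : c' ≠ [] := by simp [hc'def]
      rw [hc1, wpow_succ, List.append_assoc]
      apply plex_append_left
      cases m with
      | zero => exact plex_nil (by simp [hc'def])
      | succ m' =>
        exact ih c' hlen hc'ne hprec' (m' + 1) (by omega) z

/-- Part B, backward direction. -/
private lemma plex_pow_of_headI {u1 rest v : List X} (h1 : IsLyndon u1) (hv : v ≠ [])
    (h : PLex u1 v) : ∀ n, 1 ≤ n → PLex (u1 ++ rest) (wpow v n) := by
  intro n hn
  obtain ⟨m, rfl⟩ : ∃ m, n = m + 1 := ⟨n - 1, by omega⟩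
  rcases h with ⟨⟨c, hc⟩, hne⟩ | ⟨r, s, t, x, y, hxy, hu, hvv⟩
  · -- v is a proper prefix of u1 : u1 = v ++ c
    have hcne : c ≠ [] := by
      rintro rfl
      rw [List.append_nil] at hc
      exact hne hc
    have hplex : PLex c u1 := h1.2 v c hc.symm hv hcne
    have hprec : Prec c (v ++ c) := by
      rcases hplex with ⟨hp, _⟩ | hp
      · exfalso
        have h1' := hp.length_le
        have h2 : u1.length = v.length + c.length := by rw [← hc]; simp
        have h3 : 1 ≤ v.length := List.length_pos_iff.2 hv
        omega
      · rw [hc]; exact hp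
    rw [← hc, List.append_assoc, wpow_succ]
    apply plex_append_left
    cases m with
    | zero => exact plex_nil (by simp [hcne])
    | succ m' => exact lemC hv c.length c le_rfl hcne hprec (m' + 1) (by omega) rest
  · -- u1 ≺ v
    refine Or.inr ⟨r, s ++ rest, t ++ wpow v m, x, y, hxy, by rw [hu]; simp, ?_⟩
    rw [wpow_succ, hvv]
    simp

/-- If `v` is Lyndon and `v ≤ w` for every (nonempty) `w` in `l`, then
`v ^ |l| ≤ flatten l`. -/
private lemma wpow_le_flatten {v : List X} (hv : IsLyndon v) :
    ∀ l : List (List X), l ≠ [] → (∀ w ∈ l, w ≠ [] ∧ PLexLe v w) →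
      PLexLe (wpow v l.length) l.flatten := by
  intro l
  induction l with
  | nil => intro h _; exact absurd rfl h
  | cons a l ih =>
    intro _ hall
    obtain ⟨ha, hva⟩ := hall a List.mem_cons_self
    by_cases hl : l = []
    · subst hl
      have : wpow v 1 = v := by simp [wpow]
      simpa [this] using hva
    · have ihl := ih hl (fun w hw => hall w (List.mem_cons_of_mem a hw))
      have hk : 1 ≤ l.length := List.length_pos_iff.2 hl
      show PLexLe (wpow v (l.length + 1)) ((a :: l).flatten)
      rw [wpow_succ, List.flatten_cons]
      rcases hva with rfl | hva
      · exact plexle_append_left v ihl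
      rcases hva with ⟨⟨c, hc⟩, hne⟩ | ⟨r, s, t, x, y, hxy, hvv, haa⟩
      · -- a is a proper prefix of v : v = a ++ c
        have hcne : c ≠ [] := by
          rintro rfl
          rw [List.append_nil] at hc
          exact hne hc
        have hplex : PLex c v := hv.2 a c hc.symm ha hcne
        have hprec : Prec c v := by
          rcases hplex with ⟨hp, _⟩ | hp
          · exfalso
            have h1' := hp.length_le
            have h2 : v.length = a.length + c.length := by rw [← hc]; simp
            have h3 : 1 ≤ a.length := List.length_pos_iff.2 ha
            omega
          · exact hp
        obtain ⟨r, s, t, x, y, hxy, hcc, hvv⟩ := hprec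
        have key : PLex (c ++ wpow v l.length) (wpow v l.length) := by
          obtain ⟨k, hk'⟩ : ∃ k, l.length = k + 1 := ⟨l.length - 1, by omega⟩
          refine Or.inr ⟨r, s ++ wpow v l.length, t ++ wpow v k, x, y, hxy,
            by rw [hcc]; simp, ?_⟩
          rw [hk', wpow_succ, hvv]
          simp
        have key2 : PLex (c ++ wpow v l.length) l.flatten := plex_trans_plexle key ihl
        have : v ++ wpow v l.length = a ++ (c ++ wpow v l.length) := by
          rw [← hc, List.append_assoc]
        rw [this]
        exact Or.inr (plex_append_left a key2)
      · -- v ≺ a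
        exact Or.inr (Or.inr ⟨r, s ++ wpow v l.length, t ++ l.flatten, x, y, hxy,
          by rw [hvv]; simp, by rw [haa]; simp⟩)

private lemma chain'_rel {a : List X} :
    ∀ {l : List (List X)}, List.Chain' PLexLe (a :: l) → ∀ w ∈ l, PLexLe a w := by
  intro l
  induction l generalizing a with
  | nil => simp
  | cons b l ih =>
    intro hc w hw
    rw [List.Chain', List.isChain_cons_cons] at hc
    rcases List.mem_cons.1 hw with rfl | hw
    · exact hc.1
    · exact plexle_trans hc.1 (ih hc.2 w hw)

end Aux

/-- For nonempty words `u, v` with `v` Lyndon, the following are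
equivalent: (1) `u ≺ vⁿ` for some `n ≥ 1`; (2) `u <_lex vⁿ` for all `n ≥ 1`;
(3) the first Lyndon atom of `u` is `<_lex v`. -/
theorem prec_pow_iff_plex_pow_iff_first_atom (u v : List X) (hu : u ≠ [])
    (hv : IsLyndon v) (l : List (List X)) (hl : IsLyndonDecomp u l) :
    ((∃ n : ℕ, 1 ≤ n ∧ Prec u (wpow v n)) ↔ (∀ n : ℕ, 1 ≤ n → PLex u (wpow v n))) ∧
    ((∀ n : ℕ, 1 ≤ n → PLex u (wpow v n)) ↔ PLex l.headI v) := by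
  obtain ⟨hu_eq, hlyn, hchain⟩ := hl
  have hvne : v ≠ [] := hv.1
  obtain ⟨u1, lt, rfl⟩ : ∃ a t, l = a :: t := by
    cases l with
    | nil => exact absurd (hu_eq.trans rfl) hu
    | cons a t => exact ⟨a, t, rfl⟩
  have h1 : IsLyndon u1 := hlyn u1 List.mem_cons_self
  have hu1 : u = u1 ++ lt.flatten := by rw [hu_eq, List.flatten_cons]
  refine ⟨⟨fun ⟨n, hn, hp⟩ => prec_wpow_mono hn hp, fun h => prec_of_forall_plex hvne h⟩,
    ⟨fun h => ?_, fun h n hn => ?_⟩⟩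
  · by_contra hcon
    have hle : PLexLe v u1 := plexle_of_not_plex hcon
    have hall : ∀ w ∈ u1 :: lt, w ≠ [] ∧ PLexLe v w := by
      intro w hw
      have hwl : IsLyndon w := hlyn w hw
      rcases List.mem_cons.1 hw with rfl | hw'
      · exact ⟨hwl.1, hle⟩
      · exact ⟨hwl.1, plexle_trans hle (chain'_rel hchain w hw')⟩
    have hge := wpow_le_flatten hv (u1 :: lt) (List.cons_ne_nil u1 lt)  hall
    rw [← hu_eq] at hge
    exact not_plex_of_plexle hge (h (u1 :: lt).length (by simp))
  · rw [hu1]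
    exact plex_pow_of_headI h1 hvne h n hn
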